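/- Fix vectors c, a_ℓ ∈ ℝⁿ and define a(x) = ⟨c, x⟩ and b(x) = ⟨a_ℓ, x⟩ (Euclidean inner products), and on the open set where a(x)² + b(x)² ≠ 0 define v(x) = (a(x)² + b(x)²)⁻¹ (b(x)·c − a(x)·a_ℓ) ∈ ℝⁿ. Then at every point d with a(d)² + b(d)² ≠ 0, v is differentiable and its Fréchet derivative is the linear map on ℝⁿ given by the n×n matrix V = [2ab(a_ℓ a_ℓᵀ − c cᵀ) + (a² − b²)(c a_ℓᵀ + a_ℓ cᵀ)] / (a² + b²)², where a = a(d), b = b(d) and uwᵀ denotes the outer product of vectors u, w ∈ ℝⁿ (note the squared denominator, correcting the unsquared denominator appearing in Crisfield and Moita). -/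

import Mathlib

open Matrix

/-- Fix `c, a_ℓ ∈ ℝⁿ`, let `a(x) = ⟨c, x⟩`, `b(x) = ⟨a_ℓ, x⟩`, and on the set
where `a² + b² ≠ 0` let `v(x) = (a² + b²)⁻¹ (b·c − a·a_ℓ)`.  At every point `d`
with `a(d)² + b(d)² ≠ 0`, `v` is differentiable with Fréchet derivative given by
the `n×n` matrix
`V = [2ab(a_ℓ a_ℓᵀ − c cᵀ) + (a² − b²)(c a_ℓᵀ + a_ℓ cᵀ)] / (a² + b²)²`
(note the squared denominator). -/
theorem hasFDerivAt_corotational_v {n : ℕ} (c aℓ : Fin n → ℝ) (d : Fin n → ℝ)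
    (hd : (∑ i, c i * d i) ^ 2 + (∑ i, aℓ i * d i) ^ 2 ≠ 0) :
    HasFDerivAt
      (fun x : Fin n → ℝ =>
        ((∑ i, c i * x i) ^ 2 + (∑ i, aℓ i * x i) ^ 2)⁻¹ •
          ((∑ i, aℓ i * x i) • c - (∑ i, c i * x i) • aℓ))
      (LinearMap.toContinuousLinearMap (Matrix.mulVecLin
        (((((∑ i, c i * d i) ^ 2 + (∑ i, aℓ i * d i) ^ 2) ^ 2)⁻¹ •
          ((2 * (∑ i, c i * d i) * (∑ i, aℓ i * d i)) •
              (Matrix.vecMulVec aℓ aℓ - Matrix.vecMulVec c c) +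
            ((∑ i, c i * d i) ^ 2 - (∑ i, aℓ i * d i) ^ 2) •
              (Matrix.vecMulVec c aℓ + Matrix.vecMulVec aℓ c)))))) d := by
  have ha : HasFDerivAt (fun x : Fin n → ℝ => ∑ i, c i * x i)
      (∑ i, c i • (ContinuousLinearMap.proj i : (Fin n → ℝ) →L[ℝ] ℝ)) d := by
    apply HasFDerivAt.fun_sum
    intro i _
    exact ((ContinuousLinearMap.proj i : (Fin n → ℝ) →L[ℝ] ℝ).hasFDerivAt (x := d)).const_mul (c i)
  have hb : HasFDerivAt (fun x : Fin n → ℝ => ∑ i, aℓ i * x i)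
      (∑ i, aℓ i • (ContinuousLinearMap.proj i : (Fin n → ℝ) →L[ℝ] ℝ)) d := by
    apply HasFDerivAt.fun_sum
    intro i _
    exact ((ContinuousLinearMap.proj i : (Fin n → ℝ) →L[ℝ] ℝ).hasFDerivAt (x := d)).const_mul (aℓ i)
  have ha2 : HasFDerivAt (fun x : Fin n → ℝ => (∑ i, c i * x i) ^ 2)
      ((∑ i, c i * d i) • (∑ i, c i • (ContinuousLinearMap.proj i : (Fin n → ℝ) →L[ℝ] ℝ)) +
        (∑ i, c i * d i) • (∑ i, c i • (ContinuousLinearMap.proj i : (Fin n → ℝ) →L[ℝ] ℝ))) d := by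
    simpa [pow_two] using ha.fun_mul ha
  have hb2 : HasFDerivAt (fun x : Fin n → ℝ => (∑ i, aℓ i * x i) ^ 2)
      ((∑ i, aℓ i * d i) • (∑ i, aℓ i • (ContinuousLinearMap.proj i : (Fin n → ℝ) →L[ℝ] ℝ)) +
        (∑ i, aℓ i * d i) • (∑ i, aℓ i • (ContinuousLinearMap.proj i : (Fin n → ℝ) →L[ℝ] ℝ))) d := by
    simpa [pow_two] using hb.fun_mul hb
  have hs := (hasFDerivAt_inv' hd).comp d (ha2.add hb2)
  have hw := (hb.smul_const c).sub (ha.smul_const aℓ)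
  have H := hs.smul hw
  refine H.congr_fderiv ?_
  ext y j
  have hca : (∑ i, c i • (ContinuousLinearMap.proj i : (Fin n → ℝ) →L[ℝ] ℝ)) y
      = ∑ i, c i * y i := by simp
  have hcb : (∑ i, aℓ i • (ContinuousLinearMap.proj i : (Fin n → ℝ) →L[ℝ] ℝ)) y
      = ∑ i, aℓ i * y i := by simp
  set A := ∑ i, c i * d i with hA
  set B := ∑ i, aℓ i * d i with hB
  set Ca := ∑ i, c i * y i with hCa
  set Cb := ∑ i, aℓ i * y i with hCb
  simp only [ContinuousLinearMap.add_apply, ContinuousLinearMap.coe_comp', Function.comp_apply,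
    ContinuousLinearMap.smul_apply, ContinuousLinearMap.smulRight_apply,
    ContinuousLinearMap.coe_sub', Pi.sub_apply, Pi.add_apply, Pi.smul_apply, smul_eq_mul,
    ContinuousLinearMap.mulLeftRight_apply, ContinuousLinearMap.neg_apply,
    LinearMap.coe_toContinuousLinearMap', Matrix.mulVecLin_apply, hca, hcb]
  have hR : (((((A ^ 2 + B ^ 2) ^ 2)⁻¹ •
          ((2 * A * B) • (Matrix.vecMulVec aℓ aℓ - Matrix.vecMulVec c c) +
            (A ^ 2 - B ^ 2) • (Matrix.vecMulVec c aℓ + Matrix.vecMulVec aℓ c)))).mulVec y) j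
      = ((A ^ 2 + B ^ 2) ^ 2)⁻¹ * ((2 * A * B) * (aℓ j * Cb - c j * Ca)
          + (A ^ 2 - B ^ 2) * (c j * Cb + aℓ j * Ca)) := by
    have h1 : ∀ x, ((((A ^ 2 + B ^ 2) ^ 2)⁻¹ •
          ((2 * A * B) • (Matrix.vecMulVec aℓ aℓ - Matrix.vecMulVec c c) +
            (A ^ 2 - B ^ 2) • (Matrix.vecMulVec c aℓ + Matrix.vecMulVec aℓ c))) j x) * y x
        = (((A ^ 2 + B ^ 2) ^ 2)⁻¹ * (-(2 * A * B) * c j + (A ^ 2 - B ^ 2) * aℓ j)) * (c x * y x)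
          + (((A ^ 2 + B ^ 2) ^ 2)⁻¹ * ((2 * A * B) * aℓ j + (A ^ 2 - B ^ 2) * c j)) * (aℓ x * y x) := by
      intro x
      simp only [Matrix.smul_apply, Matrix.add_apply, Matrix.sub_apply, Matrix.vecMulVec_apply,
        smul_eq_mul]
      ring
    rw [Matrix.mulVec, hCa, hCb]
    simp only [dotProduct, h1, Finset.sum_add_distrib, ← Finset.mul_sum]
    ring
  rw [hR]
  simp only [← hA, ← hB]
  field_simp
  ring
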